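/- Let ℓ(z) = ln(1+e^{−z}) be the logistic loss, so ℓ'(z) = −1/(1+e^z) and ℓ''(z) = e^z/(1+e^z)². Then for every v ∈ ℝ^n and every z ∈ ℝ^n, with S(v) = Σ_{i=1}^n ℓ(v_i), one has (e^{S(v)} − 1) · Σ_{i=1}^n ℓ''(v_i) z_i² ≥ ( Σ_{i=1}^n ℓ'(v_i) z_i )². -/

import Mathlib

open Finset in
lemma one_add_sum_le_prod_one_add' (n : ℕ) (f : Fin n → ℝ) (hf : ∀ i, 0 ≤ f i) :
    1 + ∑ i, f i ≤ ∏ i, (1 + f i) := by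
  induction n with
  | zero => simp
  | succ m ih =>
    rw [Fin.sum_univ_succ, Fin.prod_univ_succ]
    have h1 : 1 + ∑ i : Fin m, f i.succ ≤ ∏ i : Fin m, (1 + f i.succ) :=
      ih (fun i => f i.succ) (fun i => hf i.succ)
    have h2 : (0:ℝ) ≤ ∑ i : Fin m, f i.succ := Finset.sum_nonneg fun i _ => hf _
    nlinarith [hf 0, mul_nonneg (hf 0) h2]

theorem statement_7 (n : ℕ) (v z : Fin n → ℝ) :
    (∑ i, (-(1 / (1 + Real.exp (v i)))) * z i) ^ 2 ≤
    (Real.exp (∑ i, Real.log (1 + Real.exp (-(v i)))) - 1) *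
      ∑ i, (Real.exp (v i) / (1 + Real.exp (v i)) ^ 2) * z i ^ 2 := by
  have hd : ∀ i, (0:ℝ) < 1 + Real.exp (v i) := fun i => by positivity
  set f : Fin n → ℝ := fun i => -(1 / Real.sqrt (Real.exp (v i))) with hf
  set g : Fin n → ℝ := fun i => Real.sqrt (Real.exp (v i) / (1 + Real.exp (v i)) ^ 2) * z i
    with hg
  have hsqrt : ∀ i, Real.sqrt (Real.exp (v i) / (1 + Real.exp (v i)) ^ 2)
      = Real.sqrt (Real.exp (v i)) / (1 + Real.exp (v i)) := fun i => by
    rw [Real.sqrt_div (Real.exp_pos _).le, Real.sqrt_sq (hd i).le]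
  have hspos : ∀ i, (0:ℝ) < Real.sqrt (Real.exp (v i)) := fun i =>
    Real.sqrt_pos.mpr (Real.exp_pos _)
  have hfg : ∀ i, (-(1 / (1 + Real.exp (v i)))) * z i = f i * g i := by
    intro i
    simp only [hf, hg, hsqrt i]
    field_simp
  have hf2 : ∀ i, f i ^ 2 = Real.exp (-(v i)) := by
    intro i
    simp only [hf]
    rw [Real.exp_neg]
    rw [neg_pow, div_pow, one_pow, Real.sq_sqrt (Real.exp_pos _).le]
    ring
  have hg2 : ∀ i, g i ^ 2 = (Real.exp (v i) / (1 + Real.exp (v i)) ^ 2) * z i ^ 2 := by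
    intro i
    simp only [hg, mul_pow, Real.sq_sqrt (by positivity : (0:ℝ) ≤ Real.exp (v i) / (1 + Real.exp (v i)) ^ 2)]
  have hCS := Finset.sum_mul_sq_le_sq_mul_sq Finset.univ f g
  simp only [hfg]
  refine hCS.trans ?_
  simp only [hf2, hg2]
  have hg2nn : (0:ℝ) ≤ ∑ i, (Real.exp (v i) / (1 + Real.exp (v i)) ^ 2) * z i ^ 2 :=
    Finset.sum_nonneg fun i _ => by positivity
  refine mul_le_mul_of_nonneg_right ?_ hg2nn
  have hexp : Real.exp (∑ i, Real.log (1 + Real.exp (-(v i))))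
      = ∏ i, (1 + Real.exp (-(v i))) := by
    rw [Real.exp_sum]
    exact Finset.prod_congr rfl fun i _ => Real.exp_log (by positivity)
  rw [hexp]
  have := one_add_sum_le_prod_one_add' n (fun i => Real.exp (-(v i)))
    (fun i => (Real.exp_pos _).le)
  linarith
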